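/- Fix a real α > 1 and an integer m ≥ 1. Suppose the instance is a clique instance, i.e., there exists a time T with r_j ≤ T ≤ d_j for every job j. Then for every feasible preemptive schedule S_pr on m processors there exists a feasible non-preemptive schedule S_npr on m processors with E(S_npr) ≤ (2·(2 − 1/m))^(α−1) · E(S_pr). In particular this yields a (2(2 − 1/m))^(α−1)-approximation for the problem S|clique|E. -/

import Mathlib

open MeasureTheory Set

/-- A feasible preemptive (migratory) schedule on `m` identical speed-scalable
processors, for an instance given by jobs `ι` with works `w`, release dates `r` and
deadlines `d`: each job `j` gets a constant speed `speed j > 0` and, on each processor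
`i`, a measurable set `A i j ⊆ [r j, d j]` of execution times; distinct jobs are
disjoint on each processor, a job never runs on two processors simultaneously, and the
total execution time times the speed equals the work. -/
structure PreemptiveSchedule (ι : Type) [Fintype ι] (m : ℕ) (w r d : ι → ℝ) where
  speed : ι → ℝ
  A : Fin m → ι → Set ℝ
  speed_pos : ∀ j, 0 < speed j
  measurableSet_A : ∀ i j, MeasurableSet (A i j)
  A_subset : ∀ i j, A i j ⊆ Icc (r j) (d j)
  disjoint_jobs : ∀ i, ∀ j j', j ≠ j' → Disjoint (A i j) (A i j')
  disjoint_procs : ∀ j, ∀ i i', i ≠ i' → Disjoint (A i j) (A i' j)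
  work_done : ∀ j, speed j * ∑ i, (volume (A i j)).toReal = w j

/-- The energy consumption of a preemptive schedule: each job `j` of work `w j` run at
constant speed `s_j` consumes energy `w j * s_j ^ (α - 1)`. -/
noncomputable def pEnergy {ι : Type} [Fintype ι] {m : ℕ} {w r d : ι → ℝ}
    (α : ℝ) (S : PreemptiveSchedule ι m w r d) : ℝ :=
  ∑ j, w j * S.speed j ^ (α - 1)

/-- A feasible non-preemptive schedule on `m` identical speed-scalable processors:
each job `j` is assigned a processor `proc j`, a start time `start j ≥ r j` and a
processing time `len j > 0` with `start j + len j ≤ d j`, and the open execution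
intervals of distinct jobs on the same processor are pairwise disjoint. -/
structure NPSchedule (ι : Type) [Fintype ι] (m : ℕ) (w r d : ι → ℝ) where
  proc : ι → Fin m
  start : ι → ℝ
  len : ι → ℝ
  len_pos : ∀ j, 0 < len j
  start_ge : ∀ j, r j ≤ start j
  end_le : ∀ j, start j + len j ≤ d j
  disjoint_jobs : ∀ j j', j ≠ j' → proc j = proc j' →
    Disjoint (Set.Ioo (start j) (start j + len j)) (Set.Ioo (start j') (start j' + len j'))

/-- The energy consumption of a non-preemptive schedule: job `j` runs at constant speed
`w j / len j` and consumes energy `w j * (w j / len j) ^ (α - 1)`. -/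
noncomputable def npEnergy {ι : Type} [Fintype ι] {m : ℕ} {w r d : ι → ℝ}
    (α : ℝ) (S : NPSchedule ι m w r d) : ℝ :=
  ∑ j, w j * (w j / S.len j) ^ (α - 1)


/-- Index of a lane of minimum load. -/
noncomputable def minLane {m : ℕ} (hm : 0 < m) (f : Fin m → ℝ) : Fin m :=
  Classical.choose (Finset.exists_min_image Finset.univ f ⟨⟨0, hm⟩, Finset.mem_univ _⟩)

lemma minLane_le {m : ℕ} (hm : 0 < m) (f : Fin m → ℝ) (i : Fin m) :
    f (minLane hm f) ≤ f i := by
  have h := Classical.choose_spec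
    (Finset.exists_min_image Finset.univ f ⟨⟨0, hm⟩, Finset.mem_univ _⟩)
  exact h.2 i (Finset.mem_univ i)

/-- Greedy lane loads after `k` steps: at step `k < n`, job `k` (of length `p k`, side
`b k`) is placed on the least-loaded lane of its side. -/
noncomputable def glds {n m : ℕ} (hm : 0 < m) (p : Fin n → ℝ) (b : Fin n → Bool) :
    ℕ → Bool × Fin m → ℝ
  | 0, _ => 0
  | (k+1), x =>
      if h : k < n then
        if x = (b ⟨k, h⟩, minLane hm (fun i => glds hm p b k (b ⟨k, h⟩, i))) then
          glds hm p b k x + p ⟨k, h⟩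
        else glds hm p b k x
      else glds hm p b k x

/-- The lane job `k` is placed on. -/
noncomputable def glane {n m : ℕ} (hm : 0 < m) (p : Fin n → ℝ) (b : Fin n → Bool)
    (k : Fin n) : Fin m :=
  minLane hm (fun i => glds hm p b k.1 (b k, i))

/-- The offset (load before placement) of job `k`. -/
noncomputable def goff {n m : ℕ} (hm : 0 < m) (p : Fin n → ℝ) (b : Fin n → Bool)
    (k : Fin n) : ℝ :=
  glds hm p b k.1 (b k, glane hm p b k)

lemma glds_succ {n m : ℕ} (hm : 0 < m) (p : Fin n → ℝ) (b : Fin n → Bool)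
    (k : ℕ) (h : k < n) (x : Bool × Fin m) :
    glds hm p b (k+1) x =
      if x = (b ⟨k, h⟩, minLane hm (fun i => glds hm p b k (b ⟨k, h⟩, i))) then
        glds hm p b k x + p ⟨k, h⟩
      else glds hm p b k x := by
  simp [glds, h]

lemma glds_nonneg {n m : ℕ} (hm : 0 < m) (p : Fin n → ℝ) (b : Fin n → Bool)
    (hp : ∀ j, 0 ≤ p j) : ∀ k x, 0 ≤ glds hm p b k x := by
  intro k
  induction k with
  | zero => intro x; simp [glds]
  | succ k ih =>
    intro x
    by_cases h : k < n
    · rw [glds_succ hm p b k h]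
      split
      · have := hp ⟨k, h⟩; have := ih x; linarith
      · exact ih x
    · show 0 ≤ glds hm p b (k+1) x
      rw [show glds hm p b (k+1) x = glds hm p b k x by simp [glds, h]]
      exact ih x

lemma glds_le_succ {n m : ℕ} (hm : 0 < m) (p : Fin n → ℝ) (b : Fin n → Bool)
    (hp : ∀ j, 0 ≤ p j) (k : ℕ) (x : Bool × Fin m) :
    glds hm p b k x ≤ glds hm p b (k+1) x := by
  by_cases h : k < n
  · rw [glds_succ hm p b k h]
    split
    · have := hp ⟨k, h⟩; linarith
    · exact le_refl _
  · exact le_of_eq (show glds hm p b (k+1) x = glds hm p b k x by simp [glds, h]).symm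

lemma glds_mono {n m : ℕ} (hm : 0 < m) (p : Fin n → ℝ) (b : Fin n → Bool)
    (hp : ∀ j, 0 ≤ p j) {k k' : ℕ} (hk : k ≤ k') (x : Bool × Fin m) :
    glds hm p b k x ≤ glds hm p b k' x := by
  induction k' with
  | zero =>
    have : k = 0 := by omega
    subst this; exact le_refl _
  | succ k' ih =>
    rcases Nat.lt_or_ge k (k'+1) with h | h
    · exact le_trans (ih (by omega)) (glds_le_succ hm p b hp k' x)
    · have : k = k' + 1 := by omega
      subst this; rfl

lemma goff_step {n m : ℕ} (hm : 0 < m) (p : Fin n → ℝ) (b : Fin n → Bool) (k : Fin n) :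
    glds hm p b (k.1+1) (b k, glane hm p b k) = goff hm p b k + p k := by
  unfold goff glane
  rw [glds_succ hm p b k.1 k.2]
  simp only [Fin.eta]
  rw [if_pos trivial]

/-- Stacking: a later job on the same side and lane starts after the earlier one ends. -/
lemma goff_stack {n m : ℕ} (hm : 0 < m) (p : Fin n → ℝ) (b : Fin n → Bool)
    (hp : ∀ j, 0 ≤ p j) {k k' : Fin n} (hkk : k < k')
    (hb : b k = b k') (hl : glane hm p b k = glane hm p b k') :
    goff hm p b k + p k ≤ goff hm p b k' := by
  calc goff hm p b k + p k = glds hm p b (k.1+1) (b k, glane hm p b k) :=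
        (goff_step hm p b k).symm
    _ ≤ glds hm p b k'.1 (b k, glane hm p b k) := glds_mono hm p b hp (by omega) _
    _ = goff hm p b k' := by rw [hb, hl]; rfl

lemma glds_sum {n m : ℕ} (hm : 0 < m) (p : Fin n → ℝ) (b : Fin n → Bool)
    (k : ℕ) (c0 : Bool) :
    ∑ i, glds hm p b k (c0, i) =
      ∑ j ∈ Finset.univ.filter (fun j : Fin n => j.1 < k ∧ b j = c0), p j := by
  induction k with
  | zero =>
    have : Finset.univ.filter (fun j : Fin n => j.1 < 0 ∧ b j = c0) = ∅ := by
      ext j; simp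
    simp [glds, this]
  | succ k ih =>
    by_cases h : k < n
    · set jk : Fin n := ⟨k, h⟩ with hjk
      have hstep : ∀ i : Fin m, glds hm p b (k+1) (c0, i) =
          glds hm p b k (c0, i) +
            (if c0 = b jk ∧ i = minLane hm (fun i => glds hm p b k (b jk, i)) then p jk
             else 0) := by
        intro i
        rw [glds_succ hm p b k h]
        by_cases hc : (c0, i) = (b jk, minLane hm (fun i => glds hm p b k (b jk, i)))
        · rw [if_pos hc, if_pos (by simpa [Prod.ext_iff] using hc)]
        · rw [if_neg hc, if_neg (by simpa [Prod.ext_iff] using hc)]; ring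
      rw [Finset.sum_congr rfl fun i _ => hstep i, Finset.sum_add_distrib, ih]
      have hsum2 : ∑ i : Fin m,
          (if c0 = b jk ∧ i = minLane hm (fun i => glds hm p b k (b jk, i)) then p jk
           else 0) = if b jk = c0 then p jk else 0 := by
        by_cases hc : c0 = b jk
        · simp [hc, Finset.sum_ite_eq']
        · rw [if_neg (fun h' => hc h'.symm)]
          apply Finset.sum_eq_zero
          intro i _
          rw [if_neg (fun h' => hc h'.1)]
      rw [hsum2]
      by_cases hc : b jk = c0
      · have hfil : Finset.univ.filter (fun j : Fin n => j.1 < k + 1 ∧ b j = c0) =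
            insert jk (Finset.univ.filter (fun j : Fin n => j.1 < k ∧ b j = c0)) := by
          ext j
          simp only [Finset.mem_filter, Finset.mem_univ, true_and, Finset.mem_insert]
          constructor
          · rintro ⟨hj1, hj2⟩
            rcases Nat.lt_or_ge j.1 k with h' | h'
            · exact Or.inr ⟨h', hj2⟩
            · left
              apply Fin.ext
              show (j : ℕ) = k
              omega
          · rintro (rfl | ⟨hj1, hj2⟩)
            · exact ⟨Nat.lt_succ_self k, hc⟩
            · exact ⟨by omega, hj2⟩
        rw [hfil, Finset.sum_insert (by simp [hjk]), if_pos hc]; ring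
      · have hfil : Finset.univ.filter (fun j : Fin n => j.1 < k + 1 ∧ b j = c0) =
            Finset.univ.filter (fun j : Fin n => j.1 < k ∧ b j = c0) := by
          ext j
          simp only [Finset.mem_filter, Finset.mem_univ, true_and]
          constructor
          · rintro ⟨hj1, hj2⟩
            refine ⟨?_, hj2⟩
            rcases Nat.lt_or_ge j.1 k with h' | h'
            · exact h'
            · exfalso
              have hjeq : j = jk := by
                apply Fin.ext
                show (j : ℕ) = k
                omega
              rw [hjeq] at hj2
              exact hc hj2
          · rintro ⟨hj1, hj2⟩; exact ⟨by omega, hj2⟩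
        rw [hfil, if_neg hc]; ring
    · have heq : ∀ x, glds hm p b (k+1) x = glds hm p b k x := by
        intro x; simp [glds, h]
      have hfil : Finset.univ.filter (fun j : Fin n => j.1 < k + 1 ∧ b j = c0) =
          Finset.univ.filter (fun j : Fin n => j.1 < k ∧ b j = c0) := by
        ext j
        have hjn := j.2
        simp only [Finset.mem_filter, Finset.mem_univ, true_and]
        constructor <;> (rintro ⟨h1, h2⟩; exact ⟨by omega, h2⟩)
      simp only [heq]
      rw [hfil]
      exact ih

/-- Min load times number of lanes is at most total load. -/
lemma goff_le_avg {n m : ℕ} (hm : 0 < m) (p : Fin n → ℝ) (b : Fin n → Bool) (k : Fin n) :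
    (m : ℝ) * goff hm p b k ≤
      ∑ j ∈ Finset.univ.filter (fun j : Fin n => j.1 < k.1 ∧ b j = b k), p j := by
  rw [← glds_sum hm p b k.1 (b k)]
  have h1 : ∀ i ∈ (Finset.univ : Finset (Fin m)), goff hm p b k ≤ glds hm p b k.1 (b k, i) :=
    fun i _ => by unfold goff glane; exact minLane_le hm (fun i => glds hm p b k.1 (b k, i)) i
  have := Finset.card_nsmul_le_sum Finset.univ (fun i => glds hm p b k.1 (b k, i))
    (goff hm p b k) h1
  simpa [nsmul_eq_mul] using this

/-- Sum of measures of pairwise disjoint measurable subsets of `Icc a b` is at most `b - a`. -/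
lemma sum_vol_le {κ : Type*} (s : Finset κ) (B : κ → Set ℝ) (a b : ℝ) (hab : a ≤ b)
    (hmeas : ∀ j, MeasurableSet (B j))
    (hsub : ∀ j ∈ s, B j ⊆ Icc a b)
    (hdisj : ∀ j ∈ s, ∀ j' ∈ s, j ≠ j' → Disjoint (B j) (B j')) :
    ∑ j ∈ s, (volume (B j)).toReal ≤ b - a := by
  have hIcc : volume (Icc a b) = ENNReal.ofReal (b - a) := Real.volume_Icc
  have hfin : ∀ j ∈ s, volume (B j) ≠ ⊤ := by
    intro j hj
    exact ne_top_of_le_ne_top (by simp [hIcc]) (measure_mono (hsub j hj))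
  rw [← ENNReal.toReal_sum hfin]
  have hpd : (↑s : Set κ).PairwiseDisjoint B := fun j hj j' hj' hne => hdisj j hj j' hj' hne
  rw [← measure_biUnion_finset hpd (fun j _ => hmeas j)]
  have hle : volume (⋃ j ∈ s, B j) ≤ volume (Icc a b) :=
    measure_mono (iUnion₂_subset hsub)
  calc (volume (⋃ j ∈ s, B j)).toReal ≤ (volume (Icc a b)).toReal :=
        ENNReal.toReal_mono (by simp [hIcc]) hle
    _ = b - a := by rw [hIcc, ENNReal.toReal_ofReal (by linarith)]

/-- Theorem 3 (clique instances): for `α > 1` and `m ≥ 1` processors, if the instance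
is a clique instance (there is a time `T` contained in every job's active interval
`[r j, d j]`), then for every feasible preemptive schedule there exists a feasible
non-preemptive schedule whose energy is at most `(2(2 - 1/m))^(α-1)` times the energy
of the preemptive schedule. This yields a `(2(2 - 1/m))^(α-1)`-approximation for
`S|clique|E`. -/
theorem clique_instances (ι : Type) [Fintype ι] (α : ℝ) (hα : 1 < α)
    (m : ℕ) (hm : 1 ≤ m) (w r d : ι → ℝ)
    (hw : ∀ j, 0 < w j) (hr : ∀ j, 0 ≤ r j) (hrd : ∀ j, r j < d j)
    (hclique : ∃ T : ℝ, ∀ j, r j ≤ T ∧ T ≤ d j)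
    (Spr : PreemptiveSchedule ι m w r d) :
    ∃ Snpr : NPSchedule ι m w r d,
      npEnergy α Snpr ≤ (2 * (2 - 1 / (m : ℝ))) ^ (α - 1) * pEnergy α Spr := by
  classical
  obtain ⟨T, hT⟩ := hclique
  have hm0 : 0 < m := hm
  set c : ℝ := 2 * (2 - 1 / (m : ℝ)) with hcdef
  set n := Fintype.card ι with hn
  set e : Fin n ≃ ι := (Fintype.equivFin ι).symm with he
  set L : ι → ℝ := fun x => max (T - r x) (d x - T) with hLdef
  set π : Fin n ≃ ι := (Tuple.sort (L ∘ e)).trans e with hπdef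
  have hπmono : Monotone (L ∘ ⇑π) := Tuple.monotone_sort (L ∘ e)
  set tv : ι → ℝ := fun x => ∑ i, (volume (Spr.A i x)).toReal with htvdef
  have htw : ∀ x, Spr.speed x * tv x = w x := Spr.work_done
  have htpos : ∀ x, 0 < tv x := by
    intro x
    rcases lt_trichotomy (tv x) 0 with h | h | h
    · nlinarith [Spr.speed_pos x, hw x, htw x]
    · exfalso; have h2 := htw x; rw [h, mul_zero] at h2; linarith [hw x]
    · exact h
  have hmR : (1 : ℝ) ≤ (m : ℝ) := by exact_mod_cast hm
  have hmRpos : (0 : ℝ) < (m : ℝ) := by linarith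
  have hc2 : 2 ≤ c := by
    have h1 : 1 / (m : ℝ) ≤ 1 := by
      rw [div_le_one hmRpos]; exact hmR
    rw [hcdef]; nlinarith
  have hc0 : 0 < c := by linarith
  set pF : Fin n → ℝ := fun k => tv (π k) / c with hpFdef
  have hpFpos : ∀ k, 0 < pF k := fun k => div_pos (htpos _) hc0
  have hpF0 : ∀ k, 0 ≤ pF k := fun k => le_of_lt (hpFpos k)
  set bF : Fin n → Bool := fun k => decide (d (π k) - T ≤ T - r (π k)) with hbFdef
  set off : Fin n → ℝ := goff hm0 pF bF with hoffdef
  set lane : Fin n → Fin m := glane hm0 pF bF with hlanedef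
  have hoff0 : ∀ k, 0 ≤ off k := fun k => glds_nonneg hm0 pF bF hpF0 _ _
  have hLpos : ∀ x, 0 < L x := by
    intro x
    rcases le_or_gt (T - r x) 0 with h | h
    · have h2 : 0 < d x - T := by have := (hT x).1; have := hrd x; linarith
      exact lt_max_of_lt_right h2
    · exact lt_max_of_lt_left h
  have hrL : ∀ x, T - L x ≤ r x := by
    intro x; have := le_max_left (T - r x) (d x - T); rw [hLdef]; dsimp only; linarith
  have hdL : ∀ x, d x ≤ T + L x := by
    intro x; have := le_max_right (T - r x) (d x - T); rw [hLdef]; dsimp only; linarith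
  have htle : ∀ x, tv x ≤ d x - r x := by
    intro x
    exact sum_vol_le Finset.univ (fun i => Spr.A i x) (r x) (d x) (le_of_lt (hrd x))
      (fun i => Spr.measurableSet_A i x) (fun i _ => Spr.A_subset i x)
      (fun i _ i' _ hne => Spr.disjoint_procs x i i' hne)
  have htleL : ∀ x, tv x ≤ 2 * L x := by
    intro x
    have h1 := hrL x; have h2 := hdL x; have h3 := htle x; linarith
  -- Key bound: each job fits within distance `L (π k)` of `T` on its side.
  have key : ∀ k : Fin n, off k + pF k ≤ L (π k) := by
    intro k
    set Λ := L (π k) with hΛ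
    have hΛ0 : 0 < Λ := hLpos _
    set S : Finset (Fin n) := Finset.univ.filter (fun j => j ≤ k ∧ bF j = bF k) with hS
    have hkS : k ∈ S := by simp [hS]
    have hSsum : ∑ j ∈ S, tv (π j) ≤ 2 * Λ * m := by
      have hper : ∀ i : Fin m, ∑ j ∈ S, (volume (Spr.A i (π j))).toReal ≤ 2 * Λ := by
        intro i
        have hb := sum_vol_le S (fun j => Spr.A i (π j)) (T - Λ) (T + Λ) (by linarith)
          (fun j => Spr.measurableSet_A i (π j))
          (fun j hj => by
            have hjk : j ≤ k := by
              have := (Finset.mem_filter.mp hj).2; exact this.1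
            have hLj : L (π j) ≤ Λ := hπmono hjk
            intro a ha
            have haI := Spr.A_subset i (π j) ha
            have h1 := hrL (π j); have h2 := hdL (π j)
            constructor
            · have := haI.1; linarith
            · have := haI.2; linarith)
          (fun j _ j' _ hne =>
            Spr.disjoint_jobs i (π j) (π j') (fun hEq => hne (π.injective hEq)))
        linarith
      calc ∑ j ∈ S, tv (π j) = ∑ j ∈ S, ∑ i, (volume (Spr.A i (π j))).toReal := rfl
        _ = ∑ i, ∑ j ∈ S, (volume (Spr.A i (π j))).toReal := Finset.sum_comm
        _ ≤ ∑ _i : Fin m, 2 * Λ := Finset.sum_le_sum (fun i _ => hper i)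
        _ = 2 * Λ * m := by rw [Finset.sum_const, Finset.card_univ, Fintype.card_fin,
              nsmul_eq_mul]; ring
    have hPsum : ∑ j ∈ S, pF j ≤ 2 * Λ * m / c := by
      have h1 : ∑ j ∈ S, pF j = (∑ j ∈ S, tv (π j)) / c := by
        rw [Finset.sum_div]
      rw [h1]
      gcongr
    have havg := goff_le_avg hm0 pF bF k
    have hfsub : Finset.univ.filter (fun j : Fin n => j.1 < k.1 ∧ bF j = bF k) ⊆ S.erase k := by
      intro j hj
      rw [Finset.mem_filter] at hj
      rw [Finset.mem_erase, hS, Finset.mem_filter]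
      refine ⟨?_, Finset.mem_univ j, ?_, hj.2.2⟩
      · intro hEq; subst hEq; exact absurd hj.2.1 (lt_irrefl _)
      · exact le_of_lt (Fin.lt_def.mpr hj.2.1)
    have h1 : (m : ℝ) * off k ≤ ∑ j ∈ S.erase k, pF j :=
      le_trans havg (Finset.sum_le_sum_of_subset_of_nonneg hfsub (fun j _ _ => hpF0 j))
    have h2 : ∑ j ∈ S.erase k, pF j = ∑ j ∈ S, pF j - pF k := Finset.sum_erase_eq_sub hkS
    have hcp : c * pF k ≤ 2 * Λ := by
      have h3 : c * pF k = tv (π k) := by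
        rw [hpFdef]; dsimp only; field_simp
      rw [h3, hΛ]; exact htleL (π k)
    have hcm : c * (m : ℝ) = 4 * (m : ℝ) - 2 := by
      rw [hcdef]; field_simp; ring
    have h3 : (m : ℝ) * off k ≤ 2 * Λ * m / c - pF k := by
      rw [h2] at h1; linarith
    have h4 : c * ((m : ℝ) * off k) ≤ 2 * Λ * m - c * pF k := by
      have h5 := mul_le_mul_of_nonneg_left h3 (le_of_lt hc0)
      have h6 : c * (2 * Λ * (m : ℝ) / c - pF k) = 2 * Λ * m - c * pF k := by
        field_simp
      linarith
    have hfinal : c * (m : ℝ) * (off k + pF k) ≤ c * (m : ℝ) * Λ := by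
      have hnn : 0 ≤ ((m : ℝ) - 1) * (2 * Λ - c * pF k) :=
        mul_nonneg (by linarith) (by linarith)
      calc c * (m : ℝ) * (off k + pF k)
          = c * ((m : ℝ) * off k) + c * pF k + ((m : ℝ) - 1) * (c * pF k) := by ring
        _ ≤ (2 * Λ * m - c * pF k) + c * pF k + ((m : ℝ) - 1) * (2 * Λ) := by nlinarith
        _ = (4 * (m : ℝ) - 2) * Λ := by ring
        _ = c * (m : ℝ) * Λ := by rw [hcm]
    exact le_of_mul_le_mul_left hfinal (mul_pos hc0 hmRpos)
  -- start times
  set st : Fin n → ℝ := fun k => if bF k then T - off k - pF k else T + off k with hstdef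
  have hstT : ∀ j : Fin n, bF j = true → st j = T - off j - pF j := by
    intro j hj
    show (if bF j then T - off j - pF j else T + off j) = _
    rw [hj]; simp
  have hstF : ∀ j : Fin n, bF j = false → st j = T + off j := by
    intro j hj
    show (if bF j then T - off j - pF j else T + off j) = _
    rw [hj]; simp
  have hstack : ∀ {k k' : Fin n}, k < k' → bF k = bF k' → lane k = lane k' →
      off k + pF k ≤ off k' := by
    intro k k' hlt hb hl
    exact goff_stack hm0 pF bF hpF0 hlt hb hl
  have main : ∀ k k' : Fin n, k < k' → lane k = lane k' →
      Disjoint (Set.Ioo (st k) (st k + pF k)) (Set.Ioo (st k') (st k' + pF k')) := by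
    intro k k' hlt hl
    rw [Set.disjoint_left]
    intro a ha ha'
    rw [Set.mem_Ioo] at ha ha'
    by_cases hb : bF k = bF k'
    · have hst := hstack hlt hb hl
      rcases (Bool.eq_false_or_eq_true (bF k)).symm with hbk | hbk
      · have e1 : st k = T + off k := hstF k hbk
        have e2 : st k' = T + off k' := hstF k' (hb ▸ hbk)
        rw [e1] at ha; rw [e2] at ha'
        linarith [ha.1, ha.2, ha'.1, ha'.2]
      · have e1 : st k = T - off k - pF k := hstT k hbk
        have e2 : st k' = T - off k' - pF k' := hstT k' (hb ▸ hbk)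
        rw [e1] at ha; rw [e2] at ha'
        linarith [ha.1, ha.2, ha'.1, ha'.2]
    · rcases (Bool.eq_false_or_eq_true (bF k)).symm with hbk | hbk
      · have hbk' : bF k' = true := by
          rcases (Bool.eq_false_or_eq_true (bF k')).symm with h | h
          · exact absurd (hbk.trans h.symm) hb
          · exact h
        have e1 : st k = T + off k := hstF k hbk
        have e2 : st k' = T - off k' - pF k' := hstT k' hbk'
        rw [e1] at ha; rw [e2] at ha'
        have h1 := hoff0 k; have h2 := hoff0 k'
        linarith [ha.1, ha'.2]
      · have hbk' : bF k' = false := by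
          rcases (Bool.eq_false_or_eq_true (bF k')).symm with h | h
          · exact h
          · exact absurd (hbk.trans h.symm) hb
        have e1 : st k = T - off k - pF k := hstT k hbk
        have e2 : st k' = T + off k' := hstF k' hbk'
        rw [e1] at ha; rw [e2] at ha'
        have h1 := hoff0 k; have h2 := hoff0 k'
        linarith [ha.2, ha'.1]
  have hbt : ∀ k : Fin n, bF k = true → L (π k) = T - r (π k) := by
    intro k hk
    have hk2 : d (π k) - T ≤ T - r (π k) := by
      have : decide (d (π k) - T ≤ T - r (π k)) = true := hk
      exact of_decide_eq_true this
    exact max_eq_left hk2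
  have hbf : ∀ k : Fin n, bF k = false → L (π k) = d (π k) - T := by
    intro k hk
    have hk2 : ¬(d (π k) - T ≤ T - r (π k)) := by
      have : decide (d (π k) - T ≤ T - r (π k)) = false := hk
      exact of_decide_eq_false this
    exact max_eq_right (le_of_lt (lt_of_not_ge hk2))
  refine ⟨{ proc := fun x => lane (π.symm x),
            start := fun x => st (π.symm x),
            len := fun x => pF (π.symm x),
            len_pos := fun x => hpFpos _,
            start_ge := ?_, end_le := ?_, disjoint_jobs := ?_ }, ?_⟩
  · intro x
    show r x ≤ st (π.symm x)
    have hπx : π (π.symm x) = x := π.apply_symm_apply x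
    rcases (Bool.eq_false_or_eq_true (bF (π.symm x))).symm with hbk | hbk
    · rw [hstF _ hbk]
      have h1 := (hT x).1; have h2 := hoff0 (π.symm x); linarith
    · rw [hstT _ hbk]
      have h1 := key (π.symm x)
      have h2 := hbt _ hbk
      rw [h2, hπx] at h1
      linarith
  · intro x
    show st (π.symm x) + pF (π.symm x) ≤ d x
    have hπx : π (π.symm x) = x := π.apply_symm_apply x
    rcases (Bool.eq_false_or_eq_true (bF (π.symm x))).symm with hbk | hbk
    · rw [hstF _ hbk]
      have h1 := key (π.symm x)
      have h2 := hbf _ hbk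
      rw [h2, hπx] at h1
      linarith
    · rw [hstT _ hbk]
      have h1 := (hT x).2; have h2 := hoff0 (π.symm x); linarith
  · intro x x' hne hproc
    have hkne : π.symm x ≠ π.symm x' := fun h => hne (by
      have h2 : π (π.symm x) = π (π.symm x') := by rw [h]
      rwa [π.apply_symm_apply, π.apply_symm_apply] at h2)
    rcases lt_or_gt_of_ne hkne with h | h
    · exact main _ _ h hproc
    · exact (main _ _ h hproc.symm).symm
  · apply le_of_eq
    unfold npEnergy pEnergy
    rw [Finset.mul_sum]
    apply Finset.sum_congr rfl
    intro x _
    have hπx : π (π.symm x) = x := π.apply_symm_apply x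
    have hlen : pF (π.symm x) = tv x / c := by
      show tv (π (π.symm x)) / c = tv x / c
      rw [hπx]
    have hwne : w x ≠ 0 := ne_of_gt (hw x)
    have hsne : Spr.speed x ≠ 0 := ne_of_gt (Spr.speed_pos x)
    have htne : tv x ≠ 0 := ne_of_gt (htpos x)
    have hcne : c ≠ 0 := ne_of_gt hc0
    have hspeed : w x / (tv x / c) = c * Spr.speed x := by
      have h1 : Spr.speed x * tv x = w x := htw x
      rw [div_div_eq_mul_div, ← h1]
      field_simp
    simp only [hlen, hspeed]
    rw [Real.mul_rpow (le_of_lt hc0) (le_of_lt (Spr.speed_pos x))]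
    ring
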